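/- arXiv:2605.26671 — 10 statements merged into one kernel-verified Lean document; each statement's English description precedes it below -/
import Mathlib

section
/- Let F be a finite set of points of a metric space, u a point, k a natural number, q ∈ F, and let S be a k-nearest-neighbor set of u in F. Then q ∈ S if and only if the number of elements a ∈ F with a ≠ q and dist(u, a) < dist(u, q) is strictly less than k. -/
open scoped Classical

/-- `S` is a `k`-nearest-neighbor set of `u` in `F`: `S ⊆ F`, `S` has exactly `k`
elements, and every element of `S` is strictly closer to `u` than every element of
`F \ S`. -/
def IsKNNSet {X : Type*} [MetricSpace X] (F : Finset X) (u : X) (k : ℕ)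
    (S : Finset X) : Prop :=
  S ⊆ F ∧ S.card = k ∧ ∀ s ∈ S, ∀ a ∈ F, a ∉ S → dist u s < dist u a

/-- Distance-rank characterization of RkNN membership: `q` belongs to a `k`-nearest
neighbor set of `u` in `F` iff fewer than `k` elements of `F` other than `q` are
strictly closer to `u` than `q` is. -/
theorem stmt_0 {X : Type*} [MetricSpace X] (F : Finset X) (u : X) (k : ℕ)
    (q : X) (hq : q ∈ F) (S : Finset X) (hS : IsKNNSet F u k S) :
    q ∈ S ↔ (F.filter fun a => a ≠ q ∧ dist u a < dist u q).card < k := by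
  obtain ⟨hsub, hcard, hlt⟩ := hS
  constructor
  · intro hqS
    have hsub' : (F.filter fun a => a ≠ q ∧ dist u a < dist u q) ⊆ S.erase q := by
      intro a ha
      simp only [Finset.mem_filter] at ha
      obtain ⟨haF, hne, hda⟩ := ha
      rw [Finset.mem_erase]
      refine ⟨hne, ?_⟩
      by_contra haS
      exact absurd (hlt q hqS a haF haS) (not_lt.2 hda.le)
    calc (F.filter fun a => a ≠ q ∧ dist u a < dist u q).card
        ≤ (S.erase q).card := Finset.card_le_card hsub'
      _ < S.card := Finset.card_erase_lt_of_mem hqS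
      _ = k := hcard
  · intro hlt' ; by_contra hqS
    have hsubS : S ⊆ (F.filter fun a => a ≠ q ∧ dist u a < dist u q) := by
      intro s hs
      simp only [Finset.mem_filter]
      exact ⟨hsub hs, fun h => hqS (h ▸ hs), hlt s hs q hq hqS⟩
    have := Finset.card_le_card hsubS
    omega
end

section
/- Work in the Euclidean plane ℝ² and in ℝ³. Let F be a finite set of points of ℝ², q ∈ F, k a natural number, and let R = [x₀, x₁] × [y₀, y₁] be an axis-aligned rectangle with x₀ < x₁ and y₀ < y₁. Let u ∈ R be a point with dist(u, a) ≠ dist(u, q) for every a ∈ F \ {q}. Suppose that for every a ∈ F \ {q} there are given: a vertex v_a of R, the two vertices w_a and w'_a of R adjacent to v_a, and points p_a on the segment from v_a to w_a and p'_a on the segment from v_a to w'_a, such that dist(p_a, a) = dist(p_a, q), dist(p'_a, a) = dist(p'_a, q), dist(v_a, a) < dist(v_a, q), dist(w_a, a) ≥ dist(w_a, q), and dist(w'_a, a) ≥ dist(w'_a, q). Fix z > 0 and for each a ∈ F \ {q} a height h_a with 0 < h_a < z, and define the occluder O_a = {(x, y, h_a) : (x, y) ∈ convexHull {v_a, p_a,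 p'_a}} ⊆ ℝ³. Let the ray of u be the set {(u₁, u₂, z − t) : t ∈ [0, z]}. Then the number of a ∈ F \ {q} whose occluder O_a meets the ray of u equals the number of a ∈ F \ {q} with dist(u, a) < dist(u, q); consequently, u is a reverse k-nearest neighbor of q (i.e. fewer than k elements a ∈ F \ {q} satisfy dist(u, a) < dist(u, q)) if and only if the ray of u meets fewer than k of the occluders O_a. -/
open scoped Classical
open scoped RealInnerProductSpace

noncomputable section

/-- The axis-aligned rectangle `[x₀, x₁] × [y₀, y₁]` in the Euclidean plane. -/
def rect (x₀ x₁ y₀ y₁ : ℝ) : Set (EuclideanSpace ℝ (Fin 2)) :=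
  {p | p 0 ∈ Set.Icc x₀ x₁ ∧ p 1 ∈ Set.Icc y₀ y₁}

/-- `v` is a vertex (corner) of the rectangle `[x₀, x₁] × [y₀, y₁]`. -/
def IsVertex (x₀ x₁ y₀ y₁ : ℝ) (v : EuclideanSpace ℝ (Fin 2)) : Prop :=
  (v 0 = x₀ ∨ v 0 = x₁) ∧ (v 1 = y₀ ∨ v 1 = y₁)

/-- The point of `ℝ³` above a planar point `w`, at height `h`. -/
def lift3 (w : EuclideanSpace ℝ (Fin 2)) (h : ℝ) : EuclideanSpace ℝ (Fin 3) :=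
  (WithLp.equiv 2 (Fin 3 → ℝ)).symm ![w 0, w 1, h]

/-- The vertical downward ray of a user `u`, cast from `(u₁, u₂, z)` down to the plane
`z = 0`. -/
def userRay (u : EuclideanSpace ℝ (Fin 2)) (z : ℝ) : Set (EuclideanSpace ℝ (Fin 3)) :=
  {x | ∃ t ∈ Set.Icc (0 : ℝ) z, x = lift3 u (z - t)}

/-- Squared-distance gap function. -/
def gap (a q x : EuclideanSpace ℝ (Fin 2)) : ℝ := dist x a ^ 2 - dist x q ^ 2

lemma gap_rep (a q x : EuclideanSpace ℝ (Fin 2)) :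
    gap a q x = (‖a‖ ^ 2 - ‖q‖ ^ 2) - 2 * ⟪x, a - q⟫ := by
  unfold gap
  rw [dist_eq_norm, dist_eq_norm, norm_sub_sq_real, norm_sub_sq_real, inner_sub_right]
  ring

lemma gap_affine (a q : EuclideanSpace ℝ (Fin 2)) (c₀ c₁ c₂ : ℝ)
    (x y zz : EuclideanSpace ℝ (Fin 2)) (hs : c₀ + c₁ + c₂ = 1) :
    gap a q (c₀ • x + c₁ • y + c₂ • zz) = c₀ * gap a q x + c₁ * gap a q y + c₂ * gap a q zz := by
  rw [gap_rep, gap_rep, gap_rep, gap_rep, inner_add_left, inner_add_left,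
    real_inner_smul_left, real_inner_smul_left, real_inner_smul_left]
  linear_combination (‖a‖ ^ 2 - ‖q‖ ^ 2) * hs.symm

lemma ratio01 (c d t : ℝ) (hne : c ≠ d) (h1 : min c d ≤ t) (h2 : t ≤ max c d) :
    0 ≤ (t - c) / (d - c) ∧ (t - c) / (d - c) ≤ 1 := by
  rcases lt_or_gt_of_ne hne with hlt | hlt
  · rw [min_eq_left hlt.le] at h1; rw [max_eq_right hlt.le] at h2
    exact ⟨div_nonneg (by linarith) (by linarith),
      (div_le_one (by linarith)).2 (by linarith)⟩
  · rw [min_eq_right hlt.le] at h1; rw [max_eq_left hlt.le] at h2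
    have hd : (t - c) / (d - c) = (c - t) / (c - d) := by
      rw [← neg_div_neg_eq]; ring_nf
    rw [hd]
    exact ⟨div_nonneg (by linarith) (by linarith),
      (div_le_one (by linarith)).2 (by linarith)⟩

lemma key (x₀ x₁ y₀ y₁ : ℝ) (hx : x₀ < x₁) (hy : y₀ < y₁)
    (a q u V W W' P P' : EuclideanSpace ℝ (Fin 2))
    (hu : u ∈ rect x₀ x₁ y₀ y₁)
    (hne : dist u a ≠ dist u q)
    (hV : IsVertex x₀ x₁ y₀ y₁ V)
    (hWv : IsVertex x₀ x₁ y₀ y₁ W) (hWne : W ≠ V) (hW1 : W 1 = V 1)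
    (hW'v : IsVertex x₀ x₁ y₀ y₁ W') (hW'ne : W' ≠ V) (hW'0 : W' 0 = V 0)
    (hPseg : P ∈ segment ℝ V W) (hPbis : dist P a = dist P q)
    (hP'seg : P' ∈ segment ℝ V W') (hP'bis : dist P' a = dist P' q)
    (hVa : dist V a < dist V q) (hWa : dist W q ≤ dist W a)
    (hW'a : dist W' q ≤ dist W' a) :
    u ∈ convexHull ℝ {V, P, P'} ↔ dist u a < dist u q := by
  -- sign facts for gap
  have hgV : gap a q V < 0 := by
    unfold gap
    have := pow_lt_pow_left₀ hVa dist_nonneg two_ne_zero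
    linarith
  have hgW : 0 ≤ gap a q W := by
    unfold gap
    have := pow_le_pow_left₀ dist_nonneg hWa 2
    linarith
  have hgW' : 0 ≤ gap a q W' := by
    unfold gap
    have := pow_le_pow_left₀ dist_nonneg hW'a 2
    linarith
  have hgP : gap a q P = 0 := by unfold gap; rw [hPbis]; ring
  have hgP' : gap a q P' = 0 := by unfold gap; rw [hP'bis]; ring
  have hgu_ne : gap a q u ≠ 0 := by
    intro h0
    apply hne
    have h2 : dist u a ^ 2 = dist u q ^ 2 := by unfold gap at h0; linarith
    exact (sq_eq_sq₀ dist_nonneg dist_nonneg).mp h2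
  have hB : 0 < gap a q W - gap a q V := by linarith
  have hC : 0 < gap a q W' - gap a q V := by linarith
  -- coordinates distinctness
  have hW0 : W 0 ≠ V 0 := by
    intro hh; apply hWne; ext i; fin_cases i
    · exact hh
    · exact hW1
  have hW'1 : W' 1 ≠ V 1 := by
    intro hh; apply hW'ne; ext i; fin_cases i
    · exact hW'0
    · exact hh
  -- segment parametrizations
  obtain ⟨α, β, hα0, hβ0, hαβ, hPdef⟩ := hPseg
  obtain ⟨α', γ, hα'0, hγ0, hα'γ, hP'def⟩ := hP'seg
  have hgPval : α * gap a q V + β * gap a q W = 0 := by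
    have := gap_affine a q α β 0 V W W (by linarith)
    rw [show α • V + β • W + (0:ℝ) • W = P by rw [← hPdef]; module] at this
    rw [hgP] at this; linarith
  have hgP'val : α' * gap a q V + γ * gap a q W' = 0 := by
    have := gap_affine a q α' γ 0 V W' W' (by linarith)
    rw [show α' • V + γ • W' + (0:ℝ) • W' = P' by rw [← hP'def]; module] at this
    rw [hgP'] at this; linarith
  -- β * B = A  and  γ * C = A  (A = -gap V)
  have hβB : β * (gap a q W - gap a q V) = -gap a q V := by
    have : α = 1 - β := by linarith
    rw [this] at hgPval; linarith [hgPval]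
  have hγC : γ * (gap a q W' - gap a q V) = -gap a q V := by
    have : α' = 1 - γ := by linarith
    rw [this] at hgP'val; linarith [hgP'val]
  -- barycentric coordinates of u in the corner frame
  set lam := (u 0 - V 0) / (W 0 - V 0) with hlamdef
  set mu := (u 1 - V 1) / (W' 1 - V 1) with hmudef
  have hminmax0 : min (V 0) (W 0) = x₀ ∧ max (V 0) (W 0) = x₁ := by
    rcases hV.1 with h | h <;> rcases hWv.1 with h' | h'
    · exact absurd (h'.trans h.symm) hW0
    · exact ⟨by rw [h, h', min_eq_left hx.le], by rw [h, h', max_eq_right hx.le]⟩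
    · exact ⟨by rw [h, h', min_eq_right hx.le], by rw [h, h', max_eq_left hx.le]⟩
    · exact absurd (h'.trans h.symm) hW0
  have hminmax1 : min (V 1) (W' 1) = y₀ ∧ max (V 1) (W' 1) = y₁ := by
    rcases hV.2 with h | h <;> rcases hW'v.2 with h' | h'
    · exact absurd (h'.trans h.symm) hW'1
    · exact ⟨by rw [h, h', min_eq_left hy.le], by rw [h, h', max_eq_right hy.le]⟩
    · exact ⟨by rw [h, h', min_eq_right hy.le], by rw [h, h', max_eq_left hy.le]⟩
    · exact absurd (h'.trans h.symm) hW'1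
  have hlam : 0 ≤ lam ∧ lam ≤ 1 :=
    ratio01 (V 0) (W 0) (u 0) (Ne.symm hW0) (by rw [hminmax0.1]; exact hu.1.1)
      (by rw [hminmax0.2]; exact hu.1.2)
  have hmu : 0 ≤ mu ∧ mu ≤ 1 :=
    ratio01 (V 1) (W' 1) (u 1) (Ne.symm hW'1) (by rw [hminmax1.1]; exact hu.2.1)
      (by rw [hminmax1.2]; exact hu.2.2)
  have hlamW : lam * (W 0 - V 0) = u 0 - V 0 :=
    div_mul_cancel₀ _ (sub_ne_zero.2 hW0)
  have hmuW : mu * (W' 1 - V 1) = u 1 - V 1 :=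
    div_mul_cancel₀ _ (sub_ne_zero.2 hW'1)
  clear_value lam mu
  clear hlamdef hmudef
  have hdecomp : u = (1 - lam - mu) • V + lam • W + mu • W' := by
    ext i; fin_cases i
    · show u 0 = ((1 - lam - mu) • V + lam • W + mu • W') 0
      simp only [PiLp.add_apply, PiLp.smul_apply, smul_eq_mul]
      rw [hW'0]
      linear_combination -hlamW
    · show u 1 = ((1 - lam - mu) • V + lam • W + mu • W') 1
      simp only [PiLp.add_apply, PiLp.smul_apply, smul_eq_mul]
      rw [hW1]
      linear_combination -hmuW
  have hgu : gap a q u =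
      gap a q V + lam * (gap a q W - gap a q V) + mu * (gap a q W' - gap a q V) := by
    rw [hdecomp, gap_affine a q _ _ _ _ _ _ (by ring)]
    ring
  constructor
  · -- u ∈ hull → closer
    intro hmem
    have hsub : convexHull ℝ {V, P, P'} ⊆ {x | gap a q x ≤ 0} := by
      apply convexHull_min
      · intro s hs
        rcases hs with rfl | rfl | rfl
        · exact hgV.le
        · exact le_of_eq hgP
        · exact le_of_eq hgP'
      · have hlin : IsLinearMap ℝ (fun x : EuclideanSpace ℝ (Fin 2) => ⟪x, a - q⟫) :=
          ⟨fun x y => inner_add_left x y _, fun c x => real_inner_smul_left x _ c⟩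
        have hconv := convex_halfSpace_ge hlin ((‖a‖ ^ 2 - ‖q‖ ^ 2) / 2)
        convert hconv using 1
        ext x
        rw [Set.mem_setOf_eq, Set.mem_setOf_eq, gap_rep]
        constructor <;> intro <;> linarith
    have hle : gap a q u ≤ 0 := hsub hmem
    have hlt : gap a q u < 0 := lt_of_le_of_ne hle hgu_ne
    unfold gap at hlt
    by_contra hcon
    push_neg at hcon
    have := pow_le_pow_left₀ dist_nonneg hcon 2
    linarith
  · -- closer → u ∈ hull
    intro hclose
    have hgult : gap a q u < 0 := by
      unfold gap
      have := pow_lt_pow_left₀ hclose dist_nonneg two_ne_zero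
      linarith
    set A := -gap a q V with hAdef
    have hA : 0 < A := by simp only [hAdef]; linarith
    set c₁ := lam * (gap a q W - gap a q V) / A with hc₁def
    set c₂ := mu * (gap a q W' - gap a q V) / A with hc₂def
    have hc₁0 : 0 ≤ c₁ := div_nonneg (mul_nonneg hlam.1 hB.le) hA.le
    have hc₂0 : 0 ≤ c₂ := div_nonneg (mul_nonneg hmu.1 hC.le) hA.le
    have hc₁₂ : c₁ + c₂ ≤ 1 := by
      rw [hc₁def, hc₂def, ← add_div]
      exact (div_le_one hA).2 (by rw [hAdef]; linarith [hgu, hgult])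
    have hc₁β : c₁ * β = lam := by
      rw [hc₁def]
      field_simp
      linear_combination lam * hβB
    have hc₂γ : c₂ * γ = mu := by
      rw [hc₂def]
      field_simp
      linear_combination mu * hγC
    clear_value A c₁ c₂
    have hcombo : u = (1 - c₁ - c₂) • V + c₁ • P + c₂ • P' := by
      rw [← hPdef, ← hP'def, hdecomp]
      have hα : α = 1 - β := by linarith
      have hα' : α' = 1 - γ := by linarith
      rw [hα, hα']
      match_scalars
      · linear_combination hc₁β + hc₂γ
      · linear_combination hc₁β.symm
      · linear_combination hc₂γ.symm
    rw [hcombo]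
    have hVmem : V ∈ convexHull ℝ ({V, P, P'} : Set _) :=
      subset_convexHull ℝ _ (by simp)
    have hPmem : P ∈ convexHull ℝ ({V, P, P'} : Set _) :=
      subset_convexHull ℝ _ (by simp)
    have hP'mem : P' ∈ convexHull ℝ ({V, P, P'} : Set _) :=
      subset_convexHull ℝ _ (by simp)
    have hconv : Convex ℝ (convexHull ℝ ({V, P, P'} : Set _)) := convex_convexHull ℝ _
    have hsum := hconv.sum_mem (t := (Finset.univ : Finset (Fin 3)))
      (w := ![1 - c₁ - c₂, c₁, c₂]) (z := ![V, P, P'])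
      (by
        intro i _; fin_cases i <;> simp <;> linarith)
      (by simp [Fin.sum_univ_three]; ring)
      (by intro i _; fin_cases i <;> simpa)
    simpa [Fin.sum_univ_three] using hsum

lemma ray_iff (u : EuclideanSpace ℝ (Fin 2)) (z hh : ℝ) (h1 : 0 < hh) (h2 : hh < z)
    (S : Set (EuclideanSpace ℝ (Fin 2))) :
    (userRay u z ∩ ((fun s => lift3 s hh) '' S)).Nonempty ↔ u ∈ S := by
  constructor
  · rintro ⟨x, ⟨t, ht, rfl⟩, s, hs, heq⟩
    have heq' := congrArg (WithLp.equiv 2 (Fin 3 → ℝ)) heq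
    simp only [lift3, Equiv.apply_symm_apply] at heq'
    have h0 := congrFun heq' 0
    have h1' := congrFun heq' 1
    simp only [Matrix.cons_val_zero, Matrix.cons_val_one, Matrix.head_cons] at h0 h1'
    have hsu : s = u := by ext i; fin_cases i <;> assumption
    rwa [hsu] at hs
  · intro hsS
    exact ⟨lift3 u hh, ⟨z - hh, ⟨by linarith, by linarith⟩, by rw [sub_sub_cancel]⟩,
      ⟨u, hsS, rfl⟩⟩

/-- Correctness of the ray-casting formulation of RkNN (normal occluder case): the
number of occluders met by the ray of a user `u` equals the number of competing
facilities strictly closer to `u` than the query `q`; consequently `u` is a reverse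
`k`-nearest neighbor of `q` iff its ray meets fewer than `k` occluders. -/
theorem stmt_1 (F : Finset (EuclideanSpace ℝ (Fin 2)))
    (q : EuclideanSpace ℝ (Fin 2)) (hqF : q ∈ F) (k : ℕ)
    (x₀ x₁ y₀ y₁ : ℝ) (hx : x₀ < x₁) (hy : y₀ < y₁)
    (u : EuclideanSpace ℝ (Fin 2)) (hu : u ∈ rect x₀ x₁ y₀ y₁)
    (hnd : ∀ a ∈ F.erase q, dist u a ≠ dist u q)
    (v w w' p p' : EuclideanSpace ℝ (Fin 2) → EuclideanSpace ℝ (Fin 2))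
    (hv : ∀ a ∈ F.erase q, IsVertex x₀ x₁ y₀ y₁ (v a))
    (hw : ∀ a ∈ F.erase q,
      IsVertex x₀ x₁ y₀ y₁ (w a) ∧ w a ≠ v a ∧ w a 1 = v a 1)
    (hw' : ∀ a ∈ F.erase q,
      IsVertex x₀ x₁ y₀ y₁ (w' a) ∧ w' a ≠ v a ∧ w' a 0 = v a 0)
    (hp : ∀ a ∈ F.erase q,
      p a ∈ segment ℝ (v a) (w a) ∧ dist (p a) a = dist (p a) q)
    (hp' : ∀ a ∈ F.erase q,
      p' a ∈ segment ℝ (v a) (w' a) ∧ dist (p' a) a = dist (p' a) q)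
    (hva : ∀ a ∈ F.erase q, dist (v a) a < dist (v a) q)
    (hwa : ∀ a ∈ F.erase q, dist (w a) q ≤ dist (w a) a)
    (hw'a : ∀ a ∈ F.erase q, dist (w' a) q ≤ dist (w' a) a)
    (z : ℝ) (hz : 0 < z)
    (h : EuclideanSpace ℝ (Fin 2) → ℝ)
    (hh : ∀ a ∈ F.erase q, 0 < h a ∧ h a < z)
    (O : EuclideanSpace ℝ (Fin 2) → Set (EuclideanSpace ℝ (Fin 3)))
    (hO : ∀ a ∈ F.erase q,
      O a = (fun s => lift3 s (h a)) '' convexHull ℝ {v a, p a, p' a}) :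
    ((F.erase q).filter fun a => (userRay u z ∩ O a).Nonempty).card
        = ((F.erase q).filter fun a => dist u a < dist u q).card ∧
      (((F.erase q).filter fun a => dist u a < dist u q).card < k ↔
        ((F.erase q).filter fun a => (userRay u z ∩ O a).Nonempty).card < k) := by
  have hfilter : ∀ a ∈ F.erase q,
      ((userRay u z ∩ O a).Nonempty ↔ dist u a < dist u q) := by
    intro a ha
    rw [hO a ha, ray_iff u z (h a) (hh a ha).1 (hh a ha).2]
    exact key x₀ x₁ y₀ y₁ hx hy a q u (v a) (w a) (w' a) (p a) (p' a) hu (hnd a ha)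
      (hv a ha) (hw a ha).1 (hw a ha).2.1 (hw a ha).2.2 (hw' a ha).1 (hw' a ha).2.1
      (hw' a ha).2.2 (hp a ha).1 (hp a ha).2 (hp' a ha).1 (hp' a ha).2
      (hva a ha) (hwa a ha) (hw'a a ha)
  have hcard : ((F.erase q).filter fun a => (userRay u z ∩ O a).Nonempty).card
      = ((F.erase q).filter fun a => dist u a < dist u q).card := by
    congr 1
    exact Finset.filter_congr hfilter
  exact ⟨hcard, by rw [hcard]⟩

end
end

section
/- Work in the Euclidean plane ℝ² and in ℝ³. Let a and q be distinct points of ℝ² and let R = [x₀, x₁] × [y₀, y₁] be an axis-aligned rectangle with x₀ < x₁ and y₀ < y₁. Let v be a vertex of R, let w and w' be the two vertices of R adjacent to v, and let p be a point on the segment from v to w and p' a point on the segment from v to w', such that dist(p, a) = dist(p, q), dist(p', a) = dist(p', q), dist(v, a) < dist(v, q), dist(w, a) ≥ dist(w, q), and dist(w', a) ≥ dist(w', q). Fix z > 0 and a height h with 0 < h ≤ z, and let T = {(x, y, h) : (x, y) ∈ convexHull {v, p, p'}} ⊆ ℝ³. Then for every u ∈ R, the vertical downward ray {(u₁, u₂,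 z − t) : t ∈ [0, z]} meets T if and only if dist(u, a) ≤ dist(u, q). -/
noncomputable section

/-- Extensionality for points of the Euclidean plane. -/
lemma ext2 (x y : EuclideanSpace ℝ (Fin 2)) (h0 : x 0 = y 0) (h1 : x 1 = y 1) : x = y := by
  ext i
  fin_cases i
  · exact h0
  · exact h1

/-- The affine "power" function: positive where `a` is strictly closer than `q`. -/
def F2 (a q u : EuclideanSpace ℝ (Fin 2)) : ℝ :=
  ((u 0 - q 0)^2 + (u 1 - q 1)^2) - ((u 0 - a 0)^2 + (u 1 - a 1)^2)

lemma dist_sq_eq (x y : EuclideanSpace ℝ (Fin 2)) :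
    dist x y ^ 2 = (x 0 - y 0)^2 + (x 1 - y 1)^2 := by
  rw [EuclideanSpace.dist_eq, Real.sq_sqrt (by positivity)]
  simp [Fin.sum_univ_two, Real.dist_eq, sq_abs]

lemma dist_le_iff_F2 (a q u : EuclideanSpace ℝ (Fin 2)) :
    dist u a ≤ dist u q ↔ 0 ≤ F2 a q u := by
  rw [← pow_le_pow_iff_left₀ dist_nonneg dist_nonneg two_ne_zero,
    dist_sq_eq, dist_sq_eq]
  unfold F2; constructor <;> intro <;> linarith

lemma dist_lt_iff_F2 (a q u : EuclideanSpace ℝ (Fin 2)) :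
    dist u a < dist u q ↔ 0 < F2 a q u := by
  rw [← pow_lt_pow_iff_left₀ dist_nonneg dist_nonneg two_ne_zero,
    dist_sq_eq, dist_sq_eq]
  unfold F2; constructor <;> intro <;> linarith

lemma F2_swap (a q u : EuclideanSpace ℝ (Fin 2)) : F2 q a u = - F2 a q u := by
  unfold F2; ring

lemma dist_eq_iff_F2 (a q u : EuclideanSpace ℝ (Fin 2)) (hd : dist u a = dist u q) :
    F2 a q u = 0 := by
  have h1 := (dist_le_iff_F2 a q u).mp hd.le
  have h2 := (dist_le_iff_F2 q a u).mp hd.ge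
  rw [F2_swap] at h2
  linarith

lemma F2_comb (a q x y : EuclideanSpace ℝ (Fin 2)) (α β : ℝ) (hab : α + β = 1) :
    F2 a q (α • x + β • y) = α * F2 a q x + β * F2 a q y := by
  have hα : α = 1 - β := by linarith
  subst hα
  simp only [F2, PiLp.add_apply, PiLp.smul_apply, smul_eq_mul]
  ring

lemma convex_F2_nonneg (a q : EuclideanSpace ℝ (Fin 2)) :
    Convex ℝ {u : EuclideanSpace ℝ (Fin 2) | 0 ≤ F2 a q u} := by
  intro x hx y hy α β hα hβ hab
  simp only [Set.mem_setOf_eq] at *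
  rw [F2_comb a q x y α β hab]
  positivity

/-- Existence of a parameter along an edge. -/
lemma exists_tau (x₀ x₁ c d t : ℝ) (hx : x₀ < x₁) (hne : c ≠ d)
    (hc : c = x₀ ∨ c = x₁) (hd : d = x₀ ∨ d = x₁) (ht₀ : x₀ ≤ t) (ht₁ : t ≤ x₁) :
    ∃ τ, 0 ≤ τ ∧ τ ≤ 1 ∧ t = c + τ * (d - c) := by
  have hdc : d - c ≠ 0 := sub_ne_zero.mpr (Ne.symm hne)
  refine ⟨(t - c) / (d - c), ?_, ?_, by field_simp; ring⟩
  · rcases hc with rfl | rfl <;> rcases hd with rfl | rfl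
    · exact absurd rfl hne
    · apply div_nonneg <;> linarith
    · rw [div_nonneg_iff]; right; constructor <;> linarith
    · exact absurd rfl hne
  · rcases hc with rfl | rfl <;> rcases hd with rfl | rfl
    · exact absurd rfl hne
    · rw [div_le_one (by linarith)]; linarith
    · rw [div_le_one_iff]; right; right; exact ⟨by linarith, by linarith⟩
    · exact absurd rfl hne

/-- Single-facility-pair correctness of the occluder construction (normal case): the
lifted triangle with vertices `v` and the two bisector–edge crossing points is hit by
the vertical ray of a user `u ∈ R` exactly when `a` is at least as close to `u` as
`q` is. -/
theorem stmt_3 (a q : EuclideanSpace ℝ (Fin 2)) (haq : a ≠ q)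
    (x₀ x₁ y₀ y₁ : ℝ) (hx : x₀ < x₁) (hy : y₀ < y₁)
    (v w w' p p' : EuclideanSpace ℝ (Fin 2))
    (hv : IsVertex x₀ x₁ y₀ y₁ v)
    (hw : IsVertex x₀ x₁ y₀ y₁ w) (hwv : w ≠ v) (hwadj : w 1 = v 1)
    (hw' : IsVertex x₀ x₁ y₀ y₁ w') (hw'v : w' ≠ v) (hw'adj : w' 0 = v 0)
    (hp : p ∈ segment ℝ v w) (hpbis : dist p a = dist p q)
    (hp' : p' ∈ segment ℝ v w') (hp'bis : dist p' a = dist p' q)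
    (hva : dist v a < dist v q)
    (hwa : dist w q ≤ dist w a) (hw'a : dist w' q ≤ dist w' a)
    (z : ℝ) (hz : 0 < z) (h : ℝ) (hh0 : 0 < h) (hhz : h ≤ z) :
    ∀ u ∈ rect x₀ x₁ y₀ y₁,
      (userRay u z ∩ ((fun s => lift3 s h) '' convexHull ℝ {v, p, p'})).Nonempty ↔
        dist u a ≤ dist u q := by
  intro u hu
  obtain ⟨⟨hu00, hu01⟩, ⟨hu10, hu11⟩⟩ := hu
  have hFv : 0 < F2 a q v := (dist_lt_iff_F2 a q v).mp hva
  have hFp : F2 a q p = 0 := dist_eq_iff_F2 a q p hpbis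
  have hFp' : F2 a q p' = 0 := dist_eq_iff_F2 a q p' hp'bis
  -- reduce the ray condition to 2D hull membership
  have key : (userRay u z ∩ ((fun s => lift3 s h) '' convexHull ℝ {v, p, p'})).Nonempty ↔
      u ∈ convexHull ℝ ({v, p, p'} : Set (EuclideanSpace ℝ (Fin 2))) := by
    constructor
    · rintro ⟨x, ⟨t, ht, rfl⟩, ⟨s, hs, hsx⟩⟩
      have h0 : s 0 = u 0 := congrArg (fun x : EuclideanSpace ℝ (Fin 3) => x 0) hsx
      have h1 : s 1 = u 1 := congrArg (fun x : EuclideanSpace ℝ (Fin 3) => x 1) hsx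
      have hsu : s = u := ext2 s u h0 h1
      rwa [hsu] at hs
    · intro hmem
      exact ⟨lift3 u h, ⟨z - h, ⟨by linarith, by linarith⟩, by rw [sub_sub_cancel]⟩,
        ⟨u, hmem, rfl⟩⟩
  rw [key, dist_le_iff_F2]
  constructor
  · intro hmem
    have hsub : ({v, p, p'} : Set (EuclideanSpace ℝ (Fin 2))) ⊆
        {u : EuclideanSpace ℝ (Fin 2) | 0 ≤ F2 a q u} := by
      rintro x (rfl | rfl | rfl) <;> simp only [Set.mem_setOf_eq] <;> linarith
    exact convexHull_min hsub (convex_F2_nonneg a q) hmem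
  · intro hFu
    obtain ⟨b1, b2, hb1, hb2, hb, hbe⟩ := hp
    obtain ⟨c1, c2, hc1, hc2, hc, hce⟩ := hp'
    have hp0 : p 0 = v 0 + b2 * (w 0 - v 0) := by
      have h := congrArg (fun x : EuclideanSpace ℝ (Fin 2) => x 0) hbe
      simp only [PiLp.add_apply, PiLp.smul_apply, smul_eq_mul] at h
      rw [← h]; have hb1' : b1 = 1 - b2 := by linarith
      rw [hb1']; ring
    have hp1 : p 1 = v 1 := by
      have h := congrArg (fun x : EuclideanSpace ℝ (Fin 2) => x 1) hbe
      simp only [PiLp.add_apply, PiLp.smul_apply, smul_eq_mul] at h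
      rw [← h, hwadj]; have hb1' : b1 = 1 - b2 := by linarith
      rw [hb1']; ring
    have hp'1 : p' 1 = v 1 + c2 * (w' 1 - v 1) := by
      have h := congrArg (fun x : EuclideanSpace ℝ (Fin 2) => x 1) hce
      simp only [PiLp.add_apply, PiLp.smul_apply, smul_eq_mul] at h
      rw [← h]; have hc1' : c1 = 1 - c2 := by linarith
      rw [hc1']; ring
    have hp'0 : p' 0 = v 0 := by
      have h := congrArg (fun x : EuclideanSpace ℝ (Fin 2) => x 0) hce
      simp only [PiLp.add_apply, PiLp.smul_apply, smul_eq_mul] at h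
      rw [← h, hw'adj]; have hc1' : c1 = 1 - c2 := by linarith
      rw [hc1']; ring
    have hb2pos : 0 < b2 := by
      rcases hb2.lt_or_eq with hlt | heq
      · exact hlt
      · exfalso
        have hpv : p = v := ext2 p v (by rw [hp0, ← heq]; ring) hp1
        rw [hpv] at hFp; linarith
    have hc2pos : 0 < c2 := by
      rcases hc2.lt_or_eq with hlt | heq
      · exact hlt
      · exfalso
        have hpv : p' = v := ext2 p' v hp'0 (by rw [hp'1, ← heq]; ring)
        rw [hpv] at hFp'; linarith
    have hw0ne : v 0 ≠ w 0 := fun he => hwv (ext2 w v he.symm hwadj)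
    have hw'1ne : v 1 ≠ w' 1 := fun he => hw'v (ext2 w' v hw'adj he.symm)
    obtain ⟨τ, hτ0, hτ1, hτe⟩ :=
      exists_tau x₀ x₁ (v 0) (w 0) (u 0) hx hw0ne hv.1 hw.1 hu00 hu01
    obtain ⟨τ', hτ'0, hτ'1, hτ'e⟩ :=
      exists_tau y₀ y₁ (v 1) (w' 1) (u 1) hy hw'1ne hv.2 hw'.2 hu10 hu11
    set lam := τ / b2 with hlam
    set mu := τ' / c2 with hmu
    have hlam0 : 0 ≤ lam := div_nonneg hτ0 hb2pos.le
    have hmu0 : 0 ≤ mu := div_nonneg hτ'0 hc2pos.le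
    have hu0 : u 0 = v 0 + lam * (p 0 - v 0) := by
      rw [hτe, hp0, hlam]; field_simp; ring
    have hu1 : u 1 = v 1 + mu * (p' 1 - v 1) := by
      rw [hτ'e, hp'1, hmu]; field_simp; ring
    have hFaff : (1 - lam - mu) * F2 a q v = F2 a q u := by
      have hexp : F2 a q u =
          F2 a q v + lam * (F2 a q p - F2 a q v) + mu * (F2 a q p' - F2 a q v) := by
        simp only [F2]
        rw [hu0, hu1, hp1, hp'0]
        ring
      rw [hexp, hFp, hFp']; ring
    have hsum : lam + mu ≤ 1 := by
      by_contra hcon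
      push_neg at hcon
      have : (1 - lam - mu) * F2 a q v < 0 :=
        mul_neg_of_neg_of_pos (by linarith) hFv
      rw [hFaff] at this; linarith
    have hvC : v ∈ convexHull ℝ ({v, p, p'} : Set (EuclideanSpace ℝ (Fin 2))) :=
      subset_convexHull ℝ _ (by simp)
    have hpC : p ∈ convexHull ℝ ({v, p, p'} : Set (EuclideanSpace ℝ (Fin 2))) :=
      subset_convexHull ℝ _ (by simp)
    have hp'C : p' ∈ convexHull ℝ ({v, p, p'} : Set (EuclideanSpace ℝ (Fin 2))) :=
      subset_convexHull ℝ _ (by simp)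
    set σ := lam + mu with hσ
    rcases eq_or_lt_of_le (by positivity : (0:ℝ) ≤ σ) with hσ0 | hσpos
    · have hl : lam = 0 := by simp only [hσ] at hσ0; linarith
      have hm : mu = 0 := by simp only [hσ] at hσ0; linarith
      have huv : u = v := ext2 u v (by rw [hu0, hl]; ring) (by rw [hu1, hm]; ring)
      rw [huv]; exact hvC
    · have hσne : σ ≠ 0 := ne_of_gt hσpos
      have hz1 : (lam / σ) • p + (mu / σ) • p' ∈
          convexHull ℝ ({v, p, p'} : Set (EuclideanSpace ℝ (Fin 2))) :=
        (convex_convexHull ℝ _) hpC hp'C (div_nonneg hlam0 hσpos.le)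
          (div_nonneg hmu0 hσpos.le) (by field_simp; exact hσ.symm)
      have huc : u = (1 - σ) • v + σ • ((lam / σ) • p + (mu / σ) • p') := by
        refine ext2 u _ ?_ ?_
        · simp only [PiLp.add_apply, PiLp.smul_apply, smul_eq_mul]
          rw [hu0, hp'0]; field_simp; ring
        · simp only [PiLp.add_apply, PiLp.smul_apply, smul_eq_mul]
          rw [hu1, hp1]; field_simp; ring
      rw [huc]
      exact (convex_convexHull ℝ _) hvC hz1 (by linarith) hσpos.le (by ring)

end
end

section
/- Let R = [x₀, x₁] × [y₀, y₁] ⊆ ℝ² be an axis-aligned rectangle with x₀ < x₁ and y₀ < y₁, let n ∈ ℝ² be a nonzero vector, c ∈ ℝ, and let H = {p ∈ ℝ² : ⟪p, n⟫ ≤ c} be a closed half-plane. Let v be a vertex of R with ⟪v, n⟫ < c, and let w and w' be the two vertices of R adjacent to v, with ⟪w, n⟫ ≥ c and ⟪w', n⟫ ≥ c. Let p₁ be a point on the segment from v to w and p₂ a point on the segment from v to w' with ⟪p₁, n⟫ = c and ⟪p₂, n⟫ = c. Then R ∩ H = convexHull {v, p₁, p₂}. -/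
open scoped RealInnerProductSpace

noncomputable section

lemma combo_mem_convexHull' {E : Type*} [AddCommGroup E] [Module ℝ E] {x y z : E} {a b c : ℝ}
    (ha : 0 ≤ a) (hb : 0 ≤ b) (hc : 0 ≤ c) (habc : a + b + c = 1) :
    a • x + b • y + c • z ∈ convexHull ℝ ({x, y, z} : Set E) := by
  have : a • x + b • y + c • z = ∑ i : Fin 3, ![a,b,c] i • ![x,y,z] i := by
    simp [Fin.sum_univ_three]
  rw [this]
  apply (convex_convexHull ℝ _).sum_mem
  · intro i _; fin_cases i <;> assumption
  · simp [Fin.sum_univ_three, habc]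
  · intro i _; apply subset_convexHull; fin_cases i <;> simp

lemma rect_convex' (x₀ x₁ y₀ y₁ : ℝ) : Convex ℝ (rect x₀ x₁ y₀ y₁) := by
  intro p hp q hq a b ha hb hab
  constructor
  · simpa [PiLp.add_apply, PiLp.smul_apply, smul_eq_mul] using
      (convex_Icc x₀ x₁) hp.1 hq.1 ha hb hab
  · simpa [PiLp.add_apply, PiLp.smul_apply, smul_eq_mul] using
      (convex_Icc y₀ y₁) hp.2 hq.2 ha hb hab

/-- Occluder construction, normal case: if the boundary line of a closed half-plane `H`
crosses the two rectangle edges incident to a corner `v` lying strictly inside `H`,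
then the part of the rectangle inside `H` is exactly the triangle with vertices `v`
and the two crossing points. -/
theorem stmt_4 (x₀ x₁ y₀ y₁ : ℝ) (hx : x₀ < x₁) (hy : y₀ < y₁)
    (n : EuclideanSpace ℝ (Fin 2)) (hn : n ≠ 0) (c : ℝ)
    (v w w' p₁ p₂ : EuclideanSpace ℝ (Fin 2))
    (hv : IsVertex x₀ x₁ y₀ y₁ v) (hvn : ⟪v, n⟫ < c)
    (hw : IsVertex x₀ x₁ y₀ y₁ w) (hwv : w ≠ v) (hwadj : w 1 = v 1)
    (hwn : c ≤ ⟪w, n⟫)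
    (hw' : IsVertex x₀ x₁ y₀ y₁ w') (hw'v : w' ≠ v) (hw'adj : w' 0 = v 0)
    (hw'n : c ≤ ⟪w', n⟫)
    (hp₁ : p₁ ∈ segment ℝ v w) (hp₁n : ⟪p₁, n⟫ = c)
    (hp₂ : p₂ ∈ segment ℝ v w') (hp₂n : ⟪p₂, n⟫ = c) :
    rect x₀ x₁ y₀ y₁ ∩ {p | ⟪p, n⟫ ≤ c} = convexHull ℝ {v, p₁, p₂} := by
  have hin : ∀ q : EuclideanSpace ℝ (Fin 2), ⟪q, n⟫ = q 0 * n 0 + q 1 * n 1 := fun q => by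
    simp [PiLp.inner_apply, Fin.sum_univ_two, RCLike.inner_apply]; ring
  have hmemR : ∀ u : EuclideanSpace ℝ (Fin 2), IsVertex x₀ x₁ y₀ y₁ u → u ∈ rect x₀ x₁ y₀ y₁ := by
    intro u hu
    exact ⟨by rcases hu.1 with h|h <;> rw [h] <;> exact ⟨by linarith, by linarith⟩,
           by rcases hu.2 with h|h <;> rw [h] <;> exact ⟨by linarith, by linarith⟩⟩
  have hw0v : w 0 ≠ v 0 := by
    intro h; exact hwv (by ext i; fin_cases i <;> assumption)
  have hw'1v : w' 1 ≠ v 1 := by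
    intro h; exact hw'v (by ext i; fin_cases i <;> assumption)
  have hd : 0 < c - ⟪v, n⟫ := by linarith
  -- segment data for p₁ and p₂
  obtain ⟨u₁, s, hu₁, hs0, hus, hp₁eq⟩ := hp₁
  obtain ⟨u₂, t, hu₂, ht0, hut, hp₂eq⟩ := hp₂
  have e10 : u₁ * v 0 + s * w 0 = p₁ 0 := by
    have h0 : (u₁ • v + s • w) 0 = p₁ 0 := by rw [hp₁eq]
    simpa [PiLp.add_apply, PiLp.smul_apply, smul_eq_mul] using h0
  have e11 : u₁ * v 1 + s * w 1 = p₁ 1 := by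
    have h0 : (u₁ • v + s • w) 1 = p₁ 1 := by rw [hp₁eq]
    simpa [PiLp.add_apply, PiLp.smul_apply, smul_eq_mul] using h0
  have e20 : u₂ * v 0 + t * w' 0 = p₂ 0 := by
    have h0 : (u₂ • v + t • w') 0 = p₂ 0 := by rw [hp₂eq]
    simpa [PiLp.add_apply, PiLp.smul_apply, smul_eq_mul] using h0
  have e21 : u₂ * v 1 + t * w' 1 = p₂ 1 := by
    have h0 : (u₂ • v + t • w') 1 = p₂ 1 := by rw [hp₂eq]
    simpa [PiLp.add_apply, PiLp.smul_apply, smul_eq_mul] using h0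
  have hp₁0 : p₁ 0 = v 0 + s * (w 0 - v 0) := by linear_combination -e10 + v 0 * hus
  have hp₁1 : p₁ 1 = v 1 := by linear_combination -e11 + v 1 * hus + s * hwadj
  have hp₂0 : p₂ 0 = v 0 := by linear_combination -e20 + v 0 * hut + t * hw'adj
  have hp₂1 : p₂ 1 = v 1 + t * (w' 1 - v 1) := by linear_combination -e21 + v 1 * hut
  have i1 : u₁ * ⟪v, n⟫ + s * ⟪w, n⟫ = c := by
    rw [← hp₁n, ← hp₁eq, inner_add_left, real_inner_smul_left, real_inner_smul_left]
  have i2 : u₂ * ⟪v, n⟫ + t * ⟪w', n⟫ = c := by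
    rw [← hp₂n, ← hp₂eq, inner_add_left, real_inner_smul_left, real_inner_smul_left]
  have hsA : s * (⟪w, n⟫ - ⟪v, n⟫) = c - ⟪v, n⟫ := by
    linear_combination i1 - ⟪v, n⟫ * hus
  have htB : t * (⟪w', n⟫ - ⟪v, n⟫) = c - ⟪v, n⟫ := by
    linear_combination i2 - ⟪v, n⟫ * hut
  have hs_pos : 0 < s := by
    rcases hs0.eq_or_lt with h | h
    · rw [← h, zero_mul] at hsA; linarith
    · exact h
  have ht_pos : 0 < t := by
    rcases ht0.eq_or_lt with h | h
    · rw [← h, zero_mul] at htB; linarith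
    · exact h
  have hAeq : ⟪w, n⟫ - ⟪v, n⟫ = (w 0 - v 0) * n 0 := by rw [hin w, hin v, hwadj]; ring
  have hBeq : ⟪w', n⟫ - ⟪v, n⟫ = (w' 1 - v 1) * n 1 := by rw [hin w', hin v, hw'adj]; ring
  apply Set.Subset.antisymm
  · rintro p ⟨⟨hq0, hq1⟩, hpn⟩
    have hpn' : p 0 * n 0 + p 1 * n 1 ≤ c := by rw [← hin p]; exact hpn
    -- coordinates of p as convex combinations
    have hpseg0 : p 0 ∈ segment ℝ (v 0) (w 0) := by
      rw [segment_eq_uIcc, Set.mem_uIcc]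
      rcases hv.1 with h|h <;> rcases hw.1 with h'|h'
      · exact absurd (h'.trans h.symm) hw0v
      · left; rw [h, h']; exact ⟨hq0.1, hq0.2⟩
      · right; rw [h, h']; exact ⟨hq0.1, hq0.2⟩
      · exact absurd (h'.trans h.symm) hw0v
    have hpseg1 : p 1 ∈ segment ℝ (v 1) (w' 1) := by
      rw [segment_eq_uIcc, Set.mem_uIcc]
      rcases hv.2 with h|h <;> rcases hw'.2 with h'|h'
      · exact absurd (h'.trans h.symm) hw'1v
      · left; rw [h, h']; exact ⟨hq1.1, hq1.2⟩
      · right; rw [h, h']; exact ⟨hq1.1, hq1.2⟩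
      · exact absurd (h'.trans h.symm) hw'1v
    obtain ⟨a₁, a, ha₁, ha0, haa, hpa⟩ := hpseg0
    obtain ⟨b₁, b, hb₁, hb0, hbb, hpb⟩ := hpseg1
    rw [smul_eq_mul, smul_eq_mul] at hpa hpb
    have h1 : p 0 = v 0 + a * (w 0 - v 0) := by linear_combination -hpa + v 0 * haa
    have h2 : p 1 = v 1 + b * (w' 1 - v 1) := by linear_combination -hpb + v 1 * hbb
    have hkey : a * (⟪w, n⟫ - ⟪v, n⟫) + b * (⟪w', n⟫ - ⟪v, n⟫) ≤ c - ⟪v, n⟫ := by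
      rw [hAeq, hBeq, hin v]
      have heq : a * ((w 0 - v 0) * n 0) + b * ((w' 1 - v 1) * n 1)
          = (p 0 * n 0 + p 1 * n 1) - (v 0 * n 0 + v 1 * n 1) := by
        rw [h1, h2]; ring
      linarith [hpn', heq.le, heq.ge]
    have hs_eq : a / s = a * (⟪w, n⟫ - ⟪v, n⟫) / (c - ⟪v, n⟫) := by
      rw [div_eq_div_iff hs_pos.ne' hd.ne']
      linear_combination (-a) * hsA
    have ht_eq : b / t = b * (⟪w', n⟫ - ⟪v, n⟫) / (c - ⟪v, n⟫) := by
      rw [div_eq_div_iff ht_pos.ne' hd.ne']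
      linear_combination (-b) * htB
    have hsum : a / s + b / t ≤ 1 := by
      rw [hs_eq, ht_eq, ← add_div, div_le_one hd]
      exact hkey
    have hc0 : p 0 = (1 - a / s - b / t) * v 0 + (a / s) * p₁ 0 + (b / t) * p₂ 0 := by
      rw [hp₁0, hp₂0, h1]; field_simp; ring
    have hc1 : p 1 = (1 - a / s - b / t) * v 1 + (a / s) * p₁ 1 + (b / t) * p₂ 1 := by
      rw [hp₁1, hp₂1, h2]; field_simp; ring
    have hcombo : p = (1 - a / s - b / t) • v + (a / s) • p₁ + (b / t) • p₂ := by
      ext i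
      fin_cases i
      · simpa [PiLp.add_apply, PiLp.smul_apply, smul_eq_mul] using hc0
      · simpa [PiLp.add_apply, PiLp.smul_apply, smul_eq_mul] using hc1
    rw [hcombo]
    exact combo_mem_convexHull' (by linarith) (div_nonneg ha0 hs_pos.le)
      (div_nonneg hb0 ht_pos.le) (by ring)
  · apply convexHull_min
    · have hvR := hmemR v hv
      have hp₁R : p₁ ∈ rect x₀ x₁ y₀ y₁ := by
        have := (rect_convex' x₀ x₁ y₀ y₁).segment_subset hvR (hmemR w hw)
        exact this (by exact ⟨u₁, s, hu₁, hs0, hus, hp₁eq⟩)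
      have hp₂R : p₂ ∈ rect x₀ x₁ y₀ y₁ := by
        have := (rect_convex' x₀ x₁ y₀ y₁).segment_subset hvR (hmemR w' hw')
        exact this (by exact ⟨u₂, t, hu₂, ht0, hut, hp₂eq⟩)
      rw [Set.insert_subset_iff, Set.insert_subset_iff, Set.singleton_subset_iff]
      exact ⟨⟨hvR, hvn.le⟩, ⟨hp₁R, hp₁n.le⟩, ⟨hp₂R, hp₂n.le⟩⟩
    · exact (rect_convex' x₀ x₁ y₀ y₁).inter
        (convex_halfSpace_le ⟨fun x y => inner_add_left x y n,
          fun r x => real_inner_smul_left x n r⟩ c)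

end
end

section
/- Let V be a real inner product space and let q, u, f ∈ V be points with f ≠ q, dist(q, f) ≤ dist(q, u), and the angle between the vectors f − q and u − q strictly less than π/3. Then dist(u, f) < dist(u, q). -/
/-- SIX filtering fact: a facility `f` lying at angle `< π/3` from `u` as seen from `q`,
and no farther from `q` than `u` is, is strictly closer to `u` than `q` is. -/
theorem stmt_5 {V : Type*} [NormedAddCommGroup V] [InnerProductSpace ℝ V]
    (q u f : V) (hfq : f ≠ q) (hle : dist q f ≤ dist q u)
    (hangle : InnerProductGeometry.angle (f - q) (u - q) < Real.pi / 3) :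
    dist u f < dist u q := by
  have ha : 0 < ‖f - q‖ := by simp [sub_ne_zero.mpr hfq]
  have hb : ‖f - q‖ ≤ ‖u - q‖ := by
    simpa [dist_eq_norm, norm_sub_rev] using hle
  have hb0 : 0 < ‖u - q‖ := lt_of_lt_of_le ha hb
  have hcos : (1:ℝ)/2 < Real.cos (InnerProductGeometry.angle (f - q) (u - q)) := by
    have := Real.cos_lt_cos_of_nonneg_of_le_pi
      (InnerProductGeometry.angle_nonneg _ _)
      (by linarith [Real.pi_pos] : Real.pi / 3 ≤ Real.pi) hangle
    simpa [Real.cos_pi_div_three] using this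
  have hinner : inner ℝ (f - q) (u - q) =
      ‖f - q‖ * ‖u - q‖ * Real.cos (InnerProductGeometry.angle (f - q) (u - q)) := by
    rw [InnerProductGeometry.cos_angle]
    field_simp
  have hkey : ‖f - q‖ * ‖f - q‖ < 2 * inner ℝ (f - q) (u - q) := by
    rw [hinner]
    nlinarith [mul_lt_mul_of_pos_left hcos (mul_pos ha hb0), mul_le_mul_of_nonneg_left hb ha.le]
  have hsq : ‖u - f‖ ^ 2 < ‖u - q‖ ^ 2 := by
    have h1 : u - f = (u - q) - (f - q) := by abel
    rw [h1, norm_sub_sq_real, real_inner_comm]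
    nlinarith
  rw [dist_eq_norm, dist_eq_norm]
  exact lt_of_pow_lt_pow_left₀ 2 (norm_nonneg _) hsq
end

section
/- Let V be a real inner product space, F a finite set of points of V, q ∈ F, u ∈ V, and k a natural number. Suppose there exists a subset T ⊆ F \ {q} with exactly k elements such that every f ∈ T satisfies dist(q, f) ≤ dist(q, u) and the angle between f − q and u − q is strictly less than π/3. Then the number of elements a ∈ F with a ≠ q and dist(u, a) < dist(u, q) is at least k; hence u is not a reverse k-nearest neighbor of q (i.e. it is not the case that fewer than k elements a ∈ F \ {q} satisfy dist(u, a) < dist(u, q)). -/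
open scoped Classical RealInnerProductSpace

lemma six_key {V : Type*} [NormedAddCommGroup V] [InnerProductSpace ℝ V]
    {q u f : V} (hfq : f ≠ q) (hd : dist q f ≤ dist q u)
    (ha : InnerProductGeometry.angle (f - q) (u - q) < Real.pi / 3) :
    dist u f < dist u q := by
  have hx : f - q ≠ 0 := sub_ne_zero.mpr hfq
  have hy : u - q ≠ 0 := by
    intro h0
    rw [h0, InnerProductGeometry.angle_zero_right] at ha
    nlinarith [Real.pi_pos]
  have hcos : Real.cos (Real.pi / 3) < Real.cos (InnerProductGeometry.angle (f - q) (u - q)) := by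
    apply Real.cos_lt_cos_of_nonneg_of_le_pi (InnerProductGeometry.angle_nonneg _ _) _ ha
    linarith [Real.pi_pos]
  rw [Real.cos_pi_div_three, InnerProductGeometry.cos_angle] at hcos
  have hnx : (0:ℝ) < ‖f - q‖ := norm_pos_iff.mpr hx
  have hny : (0:ℝ) < ‖u - q‖ := norm_pos_iff.mpr hy
  have hinner : ‖f - q‖ * ‖u - q‖ / 2 < (inner ℝ (f - q) (u - q) : ℝ) := by
    rw [lt_div_iff₀ (by positivity)] at hcos
    linarith
  have hd' : ‖f - q‖ ≤ ‖u - q‖ := by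
    have := hd
    rw [dist_eq_norm, dist_eq_norm] at this
    calc ‖f - q‖ = ‖q - f‖ := (norm_sub_rev _ _)
    _ ≤ ‖q - u‖ := this
    _ = ‖u - q‖ := norm_sub_rev _ _
  rw [dist_eq_norm, dist_eq_norm]
  have hsq : ‖u - f‖ ^ 2 < ‖u - q‖ ^ 2 := by
    have h1 : u - f = (u - q) - (f - q) := by abel
    have h2 : ‖(u - q) - (f - q)‖ ^ 2 =
        ‖u - q‖ ^ 2 - 2 * (inner ℝ (u - q) (f - q) : ℝ) + ‖f - q‖ ^ 2 := by
      rw [@norm_sub_sq_real]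
    rw [h1, h2, real_inner_comm]
    nlinarith
  nlinarith [norm_nonneg (u - f), norm_nonneg (u - q)]

/-- Correctness of SIX-style regional pruning: if at least `k` facilities of `F \ {q}`
lie in the same `60°` sector around `q` as `u` and no farther from `q` than `u`, then
at least `k` facilities other than `q` are strictly closer to `u` than `q`, so `u` is
not a reverse `k`-nearest neighbor of `q`. -/
theorem stmt_6 {V : Type*} [NormedAddCommGroup V] [InnerProductSpace ℝ V]
    (F : Finset V) (q : V) (hq : q ∈ F) (u : V) (k : ℕ)
    (h : ∃ T : Finset V, T ⊆ F.erase q ∧ T.card = k ∧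
      ∀ f ∈ T, dist q f ≤ dist q u ∧
        InnerProductGeometry.angle (f - q) (u - q) < Real.pi / 3) :
    k ≤ (F.filter fun a => a ≠ q ∧ dist u a < dist u q).card ∧
      ¬ (F.filter fun a => a ≠ q ∧ dist u a < dist u q).card < k := by
  obtain ⟨T, hTsub, hTcard, hT⟩ := h
  have hsub : T ⊆ F.filter fun a => a ≠ q ∧ dist u a < dist u q := by
    intro f hf
    obtain ⟨hd, ha⟩ := hT f hf
    have hfe := hTsub hf
    have hfq : f ≠ q := (Finset.mem_erase.mp hfe).1
    refine Finset.mem_filter.mpr ⟨(Finset.mem_erase.mp hfe).2, hfq, six_key hfq hd ha⟩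
  have hle : k ≤ (F.filter fun a => a ≠ q ∧ dist u a < dist u q).card := by
    rw [← hTcard]; exact Finset.card_le_card hsub
  exact ⟨hle, not_lt.mpr hle⟩
end

section
/- Let V be a real inner product space, F a finite set of points of V, u ∈ V, k a natural number, q ∈ F, and let S be a k-nearest-neighbor set of u in F. If there exist at least k elements a ∈ F \ {q} satisfying ⟪u − midpoint(a, q), a − q⟫ > 0 (i.e. u lies strictly on a's side of the perpendicular bisector of a and q), then q ∉ S. -/
open scoped Classical RealInnerProductSpace

/-- Correctness of TPL half-space pruning: if `u` lies strictly on `a`'s side of the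
perpendicular bisector of `a` and `q` for at least `k` facilities `a ∈ F \ {q}`, then
`q` is not among the `k` nearest facilities of `u`. -/
theorem stmt_7 {V : Type*} [NormedAddCommGroup V] [InnerProductSpace ℝ V]
    (F : Finset V) (u : V) (k : ℕ) (q : V) (hq : q ∈ F)
    (S : Finset V) (hS : IsKNNSet F u k S)
    (h : k ≤ ((F.erase q).filter fun a =>
        0 < ⟪u - midpoint ℝ a q, a - q⟫).card) :
    q ∉ S := by
  obtain ⟨hSF, hScard, hnear⟩ := hS
  intro hqS
  set T := (F.erase q).filter fun a => 0 < ⟪u - midpoint ℝ a q, a - q⟫ with hT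
  have key : ∀ a ∈ T, dist u a < dist u q := by
    intro a ha
    rw [hT, Finset.mem_filter] at ha
    have ha2 := ha.2
    have hsq : ‖u - q‖^2 - ‖u - a‖^2 = 2 * ⟪u - midpoint ℝ a q, a - q⟫ := by
      simp only [midpoint_eq_smul_add, inner_sub_left, inner_sub_right,
        inner_smul_left, inner_add_left, inner_add_right, RCLike.ofReal_real_eq_id, id,
        @norm_sub_sq_real, real_inner_self_eq_norm_sq, real_inner_comm a q,
        real_inner_comm u q, RCLike.star_def, conj_trivial, invOf_eq_inv]
      ring
    have hlt : ‖u - a‖^2 < ‖u - q‖^2 := by linarith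
    rw [dist_eq_norm, dist_eq_norm]
    exact lt_of_pow_lt_pow_left₀ 2 (norm_nonneg _) hlt
  have hTS : T ⊆ S := by
    intro a ha
    by_contra haS
    have haF : a ∈ F := Finset.mem_of_mem_erase (Finset.mem_of_mem_filter a ha)
    exact absurd (key a ha) (not_lt.mpr (le_of_lt (hnear q hqS a haF haS)))
  have hqT : q ∉ T := fun hc => (Finset.notMem_erase q F) (Finset.mem_of_mem_filter q hc)
  have : (insert q T).card ≤ S.card :=
    Finset.card_le_card (Finset.insert_subset hqS hTS)
  rw [Finset.card_insert_of_notMem hqT, hScard] at this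
  omega
end

section
/- Let E be a real normed vector space, F a finite set of points of E, q ∈ E, and k a natural number. Let Z = Z_k(q, F) be the influence zone, i.e. the set of points x of E whose closer-facility count (the number of elements a ∈ F with a ≠ q and dist(x, a) < dist(x, q)) is strictly less than k. Then Z is star-shaped with respect to q: for every u ∈ Z, the segment from q to u is contained in Z. -/
open scoped Classical

/-- The influence zone `Z_k(q, F)`: points whose closer-facility count (number of
`a ∈ F`, `a ≠ q`, strictly closer than `q`) is less than `k`. -/
def infZone {E : Type*} [MetricSpace E] (F : Finset E) (q : E) (k : ℕ) : Set E :=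
  {x | (F.filter fun a => a ≠ q ∧ dist x a < dist x q).card < k}

/-- The influence zone is star-shaped with respect to the query point `q`. -/
theorem stmt_9 {E : Type*} [NormedAddCommGroup E] [NormedSpace ℝ E]
    (F : Finset E) (q : E) (k : ℕ) :
    ∀ u ∈ infZone F q k, segment ℝ q u ⊆ infZone F q k := by
  intro u hu x hx
  refine lt_of_le_of_lt (Finset.card_le_card ?_) hu
  intro a ha
  simp only [Finset.mem_filter] at ha ⊢
  obtain ⟨haF, haq, hlt⟩ := ha
  refine ⟨haF, haq, ?_⟩
  have hseg : dist q x + dist x u = dist q u := dist_add_dist_of_mem_segment hx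
  calc dist u a ≤ dist u x + dist x a := dist_triangle _ _ _
    _ < dist u x + dist x q := by linarith
    _ = dist u q := by rw [dist_comm u x, dist_comm x q, dist_comm u q]; linarith
end

section
/- Let V be a real inner product space, let q, f ∈ V with f ≠ q, let d ∈ V with ‖d‖ = 1, and let 0 ≤ r ≤ r'. Set p = q + r • d and p' = q + r' • d. If dist(p, f) < dist(p, q), then dist(p', f) < dist(p', q). -/
/-- SLICE upper-arc property: along a ray from the query `q`, once a point is strictly
closer to a competing facility `f` than to `q`, so is every farther point on the ray. -/
theorem stmt_12 {V : Type*} [NormedAddCommGroup V] [InnerProductSpace ℝ V]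
    (q f : V) (hfq : f ≠ q) (d : V) (hd : ‖d‖ = 1) (r r' : ℝ)
    (hr : 0 ≤ r) (hrr' : r ≤ r')
    (h : dist (q + r • d) f < dist (q + r • d) q) :
    dist (q + r' • d) f < dist (q + r' • d) q := by
  set w := q - f with hw
  have hw0 : ‖w‖ ≠ 0 := by
    simp [hw, sub_eq_zero]
    exact fun h' => hfq h'.symm
  have key : ∀ s : ℝ, 0 ≤ s →
      (dist (q + s • d) f < dist (q + s • d) q ↔ ‖w‖ ^ 2 + 2 * s * inner ℝ w d < 0) := by
    intro s hs
    have h1 : dist (q + s • d) q = s := by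
      simp [dist_eq_norm, norm_smul, hd, abs_of_nonneg hs]
    have h2 : dist (q + s • d) f = ‖w + s • d‖ := by
      rw [dist_eq_norm, hw]; congr 1; abel
    rw [h1, h2]
    constructor
    · intro hlt
      have hsq : ‖w + s • d‖ ^ 2 < s ^ 2 := by
        have := norm_nonneg (w + s • d)
        nlinarith
      rw [norm_add_sq_real] at hsq
      have : ‖s • d‖ = s := by simp [norm_smul, hd, abs_of_nonneg hs]
      rw [this, real_inner_smul_right] at hsq
      nlinarith
    · intro hlt
      have hsq : ‖w + s • d‖ ^ 2 < s ^ 2 := by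
        rw [norm_add_sq_real]
        have : ‖s • d‖ = s := by simp [norm_smul, hd, abs_of_nonneg hs]
        rw [this, real_inner_smul_right]
        nlinarith
      nlinarith [norm_nonneg (w + s • d)]
  rw [key r hr] at h
  rw [key r' (le_trans hr hrr')]
  have hip : (inner ℝ w d : ℝ) < 0 := by nlinarith [sq_abs ‖w‖, norm_nonneg w, (norm_nonneg w).lt_of_ne' (Ne.symm (Ne.symm hw0)) ]
  nlinarith
end

section
/- Let V be a real inner product space, let q, f ∈ V, let d ∈ V with ‖d‖ = 1, and let 0 ≤ r' ≤ r. Set p = q + r • d and p' = q + r' • d. If dist(p, f) ≥ dist(p, q), then dist(p', f) ≥ dist(p', q). -/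
/-- SLICE lower-arc property: along a ray from the query `q`, if a point is not strictly
closer to a competing facility `f` than to `q`, neither is any point nearer to `q`. -/
theorem stmt_13 {V : Type*} [NormedAddCommGroup V] [InnerProductSpace ℝ V]
    (q f : V) (d : V) (hd : ‖d‖ = 1) (r r' : ℝ)
    (hr' : 0 ≤ r') (hrr' : r' ≤ r)
    (h : dist (q + r • d) q ≤ dist (q + r • d) f) :
    dist (q + r' • d) q ≤ dist (q + r' • d) f := by
  have hr : 0 ≤ r := hr'.trans hrr'
  set w := f - q with hw
  have hdq : ∀ s : ℝ, 0 ≤ s → dist (q + s • d) q = s := by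
    intro s hs
    rw [dist_eq_norm]
    simp [norm_smul, hd, abs_of_nonneg hs]
  have hdf : ∀ s : ℝ, dist (q + s • d) f ^ 2
      = s ^ 2 - 2 * s * (inner ℝ d w : ℝ) + ‖w‖ ^ 2 := by
    intro s
    have hv : q + s • d - f = s • d - w := by rw [hw]; abel
    rw [dist_eq_norm, hv, @norm_sub_sq_real, norm_smul, real_inner_smul_left, hd]
    simp [Real.norm_eq_abs, sq_abs]; ring
  rw [hdq r hr] at h
  rw [hdq r' hr']
  have hsq : r ^ 2 ≤ dist (q + r • d) f ^ 2 := pow_le_pow_left₀ hr h 2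
  rw [hdf r] at hsq
  have key : 2 * r' * (inner ℝ d w : ℝ) ≤ ‖w‖ ^ 2 := by
    rcases le_or_gt (inner ℝ d w : ℝ) 0 with ht | ht
    · nlinarith [sq_nonneg ‖w‖, mul_nonneg hr' (neg_nonneg.2 ht)]
    · nlinarith [mul_le_mul_of_nonneg_right hrr' (le_of_lt ht)]
  have : r' ^ 2 ≤ dist (q + r' • d) f ^ 2 := by
    rw [hdf r']; nlinarith
  exact le_of_pow_le_pow_left₀ two_ne_zero dist_nonneg this
end
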